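/- Let A ∈ ℂ^{n×n}, let 1 ≤ h < k ≤ n−1, and let G_h, …, G_k be Givens rotations (G_i acting on rows i and i+1 with parameters c_i ∈ ℝ, s_i ∈ ℂ, c_i^2 + |s_i|^2 = 1) such that s_i ≠ 0 for i = h,…,k. Set Q = G_h G_{h+1} ⋯ G_k and R = t(QAQ^*) − Q t(A) Q^*. Then there exist vectors a, b ∈ ℂ^n and d ∈ ℝ^n such that R = diag(d) + t(ab^*), where b_h = s_h s_{h+1} ⋯ s_k, b_i = c_{i−1} s_i s_{i+1} ⋯ s_k for i = h+1,…,k, and b_i = a_i = d_i = 0 for all i < h and all i > k+1. Moreover, if h > 1 then R e_1 = 0. -/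

import Mathlib

open Matrix BigOperators Finset

/-- The operator `t`: `t(A)_{ij} = A_{ij}` for `i > j`, `conj (A_{ji})` for
`i < j`, and `0` on the diagonal. -/
noncomputable def tOp {n : ℕ} (A : Matrix (Fin n) (Fin n) ℂ) :
    Matrix (Fin n) (Fin n) ℂ :=
  Matrix.of fun i j =>
    if j < i then A i j else if i < j then (starRingEnd ℂ) (A j i) else 0

/-- `G` is the Givens rotation acting on (0-indexed) rows `i` and `i+1` with
parameters `c ∈ ℝ`, `s ∈ ℂ`, `c² + |s|² = 1`. -/
def IsGivensAt {n : ℕ} (i : ℕ) (c : ℝ) (s : ℂ) (G : Matrix (Fin n) (Fin n) ℂ) : Prop :=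
  i + 1 < n ∧ c ^ 2 + ‖s‖ ^ 2 = 1 ∧
  ∀ p q : Fin n,
    G p q =
      if (p : ℕ) = i ∧ (q : ℕ) = i then (c : ℂ)
      else if (p : ℕ) = i ∧ (q : ℕ) = i + 1 then s
      else if (p : ℕ) = i + 1 ∧ (q : ℕ) = i then -((starRingEnd ℂ) s)
      else if (p : ℕ) = i + 1 ∧ (q : ℕ) = i + 1 then (c : ℂ)
      else if p = q then 1 else 0

/-- The ordered product `G a * G (a+1) * ⋯ * G b`. -/
noncomputable def rotProd {n : ℕ} (G : ℕ → Matrix (Fin n) (Fin n) ℂ) (a b : ℕ) :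
    Matrix (Fin n) (Fin n) ℂ :=
  ((List.range (b + 1 - a)).map (fun j => G (a + j))).prod

namespace Stmt10Aux

lemma tOp_apply {n : ℕ} (X : Matrix (Fin n) (Fin n) ℂ) (i j : Fin n) :
    tOp X i j = if j < i then X i j else if i < j then (starRingEnd ℂ) (X j i) else 0 := rfl

lemma tOp_diag {n : ℕ} (X : Matrix (Fin n) (Fin n) ℂ) (i : Fin n) : tOp X i i = 0 := by
  rw [tOp_apply, if_neg (lt_irrefl i), if_neg (lt_irrefl i)]

noncomputable def gEnt (h k : ℕ) (c : ℕ → ℝ) (s : ℕ → ℂ) (p q : ℕ) : ℂ :=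
  if h ≤ p ∧ p ≤ k + 1 ∧ h ≤ q ∧ q ≤ k + 1 then
    if p ≤ q then
      (if p = h then 1 else (c (p - 1) : ℂ)) * (∏ m ∈ Finset.Ico p q, s m) *
        (if q ≤ k then (c q : ℂ) else 1)
    else if p = q + 1 then -((starRingEnd ℂ) (s q)) else 0
  else if p = q then 1 else 0

noncomputable def bVec (h k : ℕ) (c : ℕ → ℝ) (s : ℕ → ℂ) (j : ℕ) : ℂ :=
  if h ≤ j ∧ j ≤ k + 1 then
    (if j = h then 1 else (c (j - 1) : ℂ)) * ∏ m ∈ Finset.Icc j k, s m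
  else 0

noncomputable def vVec (h k : ℕ) (c : ℕ → ℝ) (s : ℕ → ℂ) (l : ℕ) : ℂ :=
  if h ≤ l ∧ l ≤ k + 1 then
    (if l ≤ k then (c l : ℂ) else 1) * (∏ m ∈ Finset.Icc l k, s m)⁻¹
  else 0

lemma gEnt_low (h k : ℕ) (c : ℕ → ℝ) (s : ℕ → ℂ) (p q : ℕ) (hq : q < p)
    (hne : ¬(p = q + 1 ∧ h ≤ q ∧ q ≤ k)) : gEnt h k c s p q = 0 := by
  unfold gEnt; split_ifs <;> first | rfl | omega

lemma gEnt_out (h k : ℕ) (c : ℕ → ℝ) (s : ℕ → ℂ) (p q : ℕ) (hp : p < h ∨ k + 1 < p) :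
    gEnt h k c s p q = if p = q then 1 else 0 := by
  unfold gEnt; split_ifs <;> first | rfl | omega

lemma gEnt_factor (h k : ℕ) (c : ℕ → ℝ) (s : ℕ → ℂ)
    (hs : ∀ i, h ≤ i → i ≤ k → s i ≠ 0) (p q : ℕ)
    (hp : h ≤ p) (hp2 : p ≤ k + 1) (hpq : p ≤ q) :
    gEnt h k c s p q = bVec h k c s p * vVec h k c s q := by
  by_cases hq : q ≤ k + 1
  · have hsplit : (∏ m ∈ Finset.Icc p k, s m)
        = (∏ m ∈ Finset.Ico p q, s m) * ∏ m ∈ Finset.Icc q k, s m := by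
      rw [← Finset.Ico_add_one_right_eq_Icc, ← Finset.Ico_add_one_right_eq_Icc,
        Finset.prod_Ico_consecutive _ hpq (by omega)]
    have hne : (∏ m ∈ Finset.Icc q k, s m) ≠ 0 :=
      Finset.prod_ne_zero_iff.mpr fun m hm => by
        rw [Finset.mem_Icc] at hm; exact hs m (by omega) hm.2
    unfold gEnt bVec vVec
    rw [if_pos (show h ≤ p ∧ p ≤ k + 1 ∧ h ≤ q ∧ q ≤ k + 1 by omega), if_pos hpq,
      if_pos (show h ≤ p ∧ p ≤ k + 1 by omega), if_pos (show h ≤ q ∧ q ≤ k + 1 by omega),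
      hsplit]
    generalize (if p = h then (1:ℂ) else (c (p-1) : ℂ)) = α
    generalize (if q ≤ k then (c q : ℂ) else (1:ℂ)) = β
    field_simp
  · unfold gEnt vVec
    rw [if_neg (show ¬(h ≤ p ∧ p ≤ k + 1 ∧ h ≤ q ∧ q ≤ k + 1) by omega),
      if_neg (show ¬ p = q by omega), if_neg (show ¬(h ≤ q ∧ q ≤ k + 1) by omega), mul_zero]

lemma gEnt_stable (h k q : ℕ) (c : ℕ → ℝ) (s : ℕ → ℂ) (hhk : h ≤ k)
    (hq : q ≤ k ∨ k + 3 ≤ q) (p : ℕ) :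
    gEnt h k c s p q = gEnt h (k + 1) c s p q := by
  unfold gEnt
  split_ifs <;> first | rfl | omega

lemma gEnt_step1 (h k : ℕ) (hhk : h ≤ k) (c : ℕ → ℝ) (s : ℕ → ℂ) (p : ℕ) :
    gEnt h k c s p (k + 1) * (c (k + 1) : ℂ)
      + gEnt h k c s p (k + 2) * (-((starRingEnd ℂ) (s (k + 1))))
      = gEnt h (k + 1) c s p (k + 1) := by
  have h2 : gEnt h k c s p (k + 2) = if p = k + 2 then 1 else 0 := by
    unfold gEnt; split_ifs <;> first | rfl | omega
  rw [h2]; unfold gEnt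
  split_ifs <;> first | omega | ring

lemma gEnt_step2 (h k : ℕ) (hhk : h ≤ k) (c : ℕ → ℝ) (s : ℕ → ℂ) (p : ℕ) :
    gEnt h k c s p (k + 1) * s (k + 1)
      + gEnt h k c s p (k + 2) * (c (k + 1) : ℂ)
      = gEnt h (k + 1) c s p (k + 2) := by
  have h2 : gEnt h k c s p (k + 2) = if p = k + 2 then 1 else 0 := by
    unfold gEnt; split_ifs <;> first | rfl | omega
  rw [h2]
  by_cases hp1 : h ≤ p ∧ p ≤ k + 1
  · have e1 : gEnt h k c s p (k + 1)
        = (if p = h then 1 else (c (p - 1) : ℂ)) * (∏ m ∈ Finset.Ico p (k + 1), s m) := by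
      unfold gEnt
      rw [if_pos (by omega : h ≤ p ∧ p ≤ k + 1 ∧ h ≤ k + 1 ∧ k + 1 ≤ k + 1),
        if_pos (by omega : p ≤ k + 1), if_neg (by omega : ¬ k + 1 ≤ k), mul_one]
    have e2 : gEnt h (k + 1) c s p (k + 2)
        = (if p = h then 1 else (c (p - 1) : ℂ)) * (∏ m ∈ Finset.Ico p (k + 2), s m) := by
      unfold gEnt
      rw [if_pos (by omega : h ≤ p ∧ p ≤ k + 1 + 1 ∧ h ≤ k + 2 ∧ k + 2 ≤ k + 1 + 1),
        if_pos (by omega : p ≤ k + 2), if_neg (by omega : ¬ k + 2 ≤ k + 1), mul_one]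
    rw [e1, e2, if_neg (by omega : ¬ p = k + 2),
      Finset.prod_Ico_succ_top (by omega : p ≤ k + 1)]
    ring
  · by_cases hp2 : p = k + 2
    · have e1 : gEnt h k c s p (k + 1) = 0 := by
        unfold gEnt; split_ifs <;> first | rfl | omega
      have e2 : gEnt h (k + 1) c s p (k + 2) = (c (k + 1) : ℂ) := by
        unfold gEnt
        rw [if_pos (by omega : h ≤ p ∧ p ≤ k + 1 + 1 ∧ h ≤ k + 2 ∧ k + 2 ≤ k + 1 + 1),
          if_pos (by omega : p ≤ k + 2), if_neg (by omega : ¬ p = h),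
          if_neg (by omega : ¬ k + 2 ≤ k + 1), mul_one,
          show p - 1 = k + 1 by omega, show Finset.Ico p (k+2) = ∅ by
            rw [Finset.Ico_eq_empty_iff]; omega, Finset.prod_empty, mul_one]
      rw [e1, e2, if_pos hp2]; ring
    · have e1 : gEnt h k c s p (k + 1) = 0 := by
        unfold gEnt; split_ifs <;> first | rfl | omega
      have e2 : gEnt h (k + 1) c s p (k + 2) = 0 := by
        unfold gEnt; split_ifs <;> first | rfl | omega
      rw [e1, e2, if_neg hp2]; ring

lemma rotProd_succ {n : ℕ} (G : ℕ → Matrix (Fin n) (Fin n) ℂ) (a b : ℕ) (hab : a ≤ b + 1) :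
    rotProd G a (b + 1) = rotProd G a b * G (b + 1) := by
  unfold rotProd
  rw [show b + 1 + 1 - a = (b + 1 - a) + 1 by omega, List.range_succ, List.map_append,
    List.prod_append]
  simp [show a + (b + 1 - a) = b + 1 by omega]

lemma sum_two_aux {n : ℕ} (f : Fin n → ℂ) (i j : Fin n) (hij : i ≠ j) (X Y : ℂ) :
    ∑ m : Fin n, f m * (if m = i then X else if m = j then Y else 0) = f i * X + f j * Y := by
  have key : ∀ m : Fin n, f m * (if m = i then X else if m = j then Y else 0)
      = (if m = i then f i * X else 0) + (if m = j then f j * Y else 0) := by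
    intro m
    by_cases h1 : m = i
    · subst h1; simp [hij]
    · by_cases h2 : m = j
      · subst h2; simp [h1]
      · simp [h1, h2]
  rw [Finset.sum_congr rfl fun m _ => key m, Finset.sum_add_distrib]
  simp

lemma rotProd_entry {n : ℕ} (h : ℕ) (c : ℕ → ℝ) (s : ℕ → ℂ)
    (G : ℕ → Matrix (Fin n) (Fin n) ℂ) (k : ℕ) (hhk : h ≤ k) :
    k + 1 < n → (∀ i, h ≤ i → i ≤ k → IsGivensAt i (c i) (s i) (G i)) →
    ∀ p q : Fin n, rotProd G h k p q = gEnt h k c s (p : ℕ) (q : ℕ) := by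
  induction k, hhk using Nat.le_induction with
  | base =>
    intro hn hG p q
    have hbase : rotProd G h h = G h := by
      unfold rotProd
      rw [show h + 1 - h = 1 by omega]
      norm_num [List.range_succ]
    rw [hbase, (hG h le_rfl le_rfl).2.2 p q]
    unfold gEnt
    simp only [Fin.ext_iff]
    split_ifs <;> first | rfl | omega |
      simp_all [Finset.Ico_self, Nat.Ico_succ_singleton, Nat.add_sub_cancel]
  | succ k hk IH =>
    intro hn hG p q
    have hkn : k + 1 < n := by omega
    have IH' := IH (by omega) (fun i hi hik => hG i hi (by omega))
    have hGent := (hG (k + 1) (by omega) le_rfl).2.2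
    rw [rotProd_succ G h k (by omega), Matrix.mul_apply]
    by_cases hq1 : (q : ℕ) = k + 1
    · have hcol : ∀ m : Fin n, G (k + 1) m q
          = if m = (⟨k + 1, by omega⟩ : Fin n) then (c (k + 1) : ℂ)
            else if m = (⟨k + 2, by omega⟩ : Fin n) then -((starRingEnd ℂ) (s (k + 1))) else 0 := by
        intro m
        rw [hGent m q]
        simp only [Fin.ext_iff, Fin.val_mk, hq1, and_true]
        split_ifs <;> first | rfl | omega
      rw [Finset.sum_congr rfl fun m _ => by rw [hcol m],
        sum_two_aux _ _ _ (by simp [Fin.ext_iff]) _ _, IH' p ⟨k + 1, by omega⟩,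
        IH' p ⟨k + 2, by omega⟩]
      show gEnt h k c s _ (k+1) * _ + gEnt h k c s _ (k+2) * _ = _
      rw [hq1]
      exact gEnt_step1 h k hk c s p
    · by_cases hq2 : (q : ℕ) = k + 2
      · have hcol : ∀ m : Fin n, G (k + 1) m q
            = if m = (⟨k + 1, by omega⟩ : Fin n) then s (k + 1)
              else if m = (⟨k + 2, by omega⟩ : Fin n) then (c (k + 1) : ℂ) else 0 := by
          intro m
          rw [hGent m q]
          simp only [Fin.ext_iff, Fin.val_mk, hq2, and_true]
          split_ifs <;> first | rfl | omega
        rw [Finset.sum_congr rfl fun m _ => by rw [hcol m],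
          sum_two_aux _ _ _ (by simp [Fin.ext_iff]) _ _, IH' p ⟨k + 1, by omega⟩,
          IH' p ⟨k + 2, by omega⟩]
        show gEnt h k c s _ (k+1) * _ + gEnt h k c s _ (k+2) * _ = _
        rw [hq2]
        exact gEnt_step2 h k hk c s p
      · have hcol : ∀ m : Fin n, G (k + 1) m q = if m = q then 1 else 0 := by
          intro m
          rw [hGent m q]
          simp only [Fin.ext_iff]
          split_ifs <;> first | rfl | omega
        rw [Finset.sum_congr rfl fun m _ => by rw [hcol m]]
        simp only [mul_ite, mul_one, mul_zero, Finset.sum_ite_eq', Finset.mem_univ, if_pos]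
        rw [IH' p q]
        exact gEnt_stable h k (q : ℕ) c s hk (by omega) (p : ℕ)

end Stmt10Aux

open Stmt10Aux in
/-- Theorem 2.5 of the paper (0-indexed: the rotations act on rows `h, …, k`
and `k+1`, i.e. 1-indexed rows `h+1, …, k+2`).  The residual
`R = t(QAQᴴ) - Q t(A) Qᴴ` equals `diag d + t(abᴴ)` where `b` does not
depend on `A`: `b_h = s_h ⋯ s_k`, `b_i = c_{i-1} s_i ⋯ s_k` for
`h+1 ≤ i ≤ k`, and `a_i = b_i = d_i = 0` for `i < h` or `i > k+1`.
Moreover if `h > 0` then the first column of `R` vanishes (`R e₁ = 0`). -/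
theorem stmt_10 (n h k : ℕ) (hhk : h < k) (hk : k + 1 < n)
    (c : ℕ → ℝ) (s : ℕ → ℂ) (G : ℕ → Matrix (Fin n) (Fin n) ℂ)
    (hG : ∀ i, h ≤ i → i ≤ k → IsGivensAt i (c i) (s i) (G i))
    (hs : ∀ i, h ≤ i → i ≤ k → s i ≠ 0)
    (A : Matrix (Fin n) (Fin n) ℂ) :
    let Q := rotProd G h k
    let R := tOp (Q * A * Qᴴ) - Q * tOp A * Qᴴ
    ∃ (a b : Fin n → ℂ) (d : Fin n → ℝ),
      R = Matrix.diagonal (fun i => (d i : ℂ)) +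
          tOp (Matrix.vecMulVec a (fun j => (starRingEnd ℂ) (b j))) ∧
      (∀ i : Fin n, (i : ℕ) = h → b i = ∏ j ∈ Finset.Icc h k, s j) ∧
      (∀ i : Fin n, h + 1 ≤ (i : ℕ) → (i : ℕ) ≤ k →
        b i = ((c ((i : ℕ) - 1) : ℂ)) * ∏ j ∈ Finset.Icc (i : ℕ) k, s j) ∧
      (∀ i : Fin n, ((i : ℕ) < h ∨ k + 1 < (i : ℕ)) → b i = 0 ∧ a i = 0 ∧ d i = 0) ∧
      (0 < h → ∀ p : Fin n, R p ⟨0, by omega⟩ = 0) := by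
  intro Q R
  have hQdef : Q = rotProd G h k := rfl
  have hRdef : R = tOp (Q * A * Qᴴ) - Q * tOp A * Qᴴ := rfl
  have hQ : ∀ p q : Fin n, Q p q = gEnt h k c s (p : ℕ) (q : ℕ) := by
    rw [hQdef]
    exact rotProd_entry h c s G k hhk.le hk hG
  set U : Matrix (Fin n) (Fin n) ℂ := A - tOp A with hUdef
  have hUup : ∀ m l : Fin n, (l : ℕ) < (m : ℕ) → U m l = 0 := by
    intro m l hml
    rw [hUdef, Matrix.sub_apply, tOp_apply, if_pos (Fin.lt_def.mpr hml), sub_self]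
  have hQU0 : ∀ i l : Fin n, (l : ℕ) < (i : ℕ) →
      ((l : ℕ) + 2 ≤ (i : ℕ) ∨ (l : ℕ) < h ∨ k < (l : ℕ)) → (Q * U) i l = 0 := by
    intro i l hli hc
    rw [Matrix.mul_apply]
    apply Finset.sum_eq_zero
    intro m _
    rcases lt_or_ge (l : ℕ) (m : ℕ) with hml | hml
    · rw [hUup m l hml, mul_zero]
    · rw [hQ i m, gEnt_low h k c s _ _ (by omega) (by omega), zero_mul]
  have htOpH : ∀ X : Matrix (Fin n) (Fin n) ℂ, (tOp X)ᴴ = tOp X := by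
    intro X
    ext i j
    simp only [Matrix.conjTranspose_apply, tOp_apply]
    rcases lt_trichotomy i j with hij | hij | hij
    · rw [if_pos hij, if_neg (asymm hij), if_pos hij, starRingEnd_apply]
    · subst hij
      rw [if_neg (lt_irrefl _), if_neg (lt_irrefl _), star_zero]
    · rw [if_neg (asymm hij), if_pos hij, if_pos hij, ← starRingEnd_apply,
        Complex.conj_conj]

  have hRH : ∀ i j : Fin n, R i j = (starRingEnd ℂ) (R j i) := by
    have hH : Rᴴ = R := by
      rw [hRdef]
      simp [Matrix.conjTranspose_sub, Matrix.conjTranspose_mul, Matrix.mul_assoc, htOpH]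
    intro i j
    conv_lhs => rw [← hH]
    rw [Matrix.conjTranspose_apply, starRingEnd_apply]
  have hRlow : ∀ i j : Fin n, (j : ℕ) < (i : ℕ) →
      R i j = ∑ l, (Q * U) i l * (starRingEnd ℂ) (Q j l) := by
    intro i j hji
    have hM : Q * A * Qᴴ - Q * tOp A * Qᴴ = (Q * U) * Qᴴ := by
      rw [hUdef, Matrix.mul_sub, Matrix.sub_mul]
    have h1 : tOp (Q * A * Qᴴ) i j = (Q * A * Qᴴ) i j := by
      rw [tOp_apply, if_pos (Fin.lt_def.mpr hji)]
    rw [hRdef, Matrix.sub_apply, h1, ← Matrix.sub_apply, hM, Matrix.mul_apply]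
    exact Finset.sum_congr rfl fun l _ => by
      rw [Matrix.conjTranspose_apply, starRingEnd_apply]
  set aF : Fin n → ℂ := fun i =>
    if h ≤ (i : ℕ) then ∑ l, (Q * U) i l * (starRingEnd ℂ) (vVec h k c s (l : ℕ)) else 0
    with haF
  set bF : Fin n → ℂ := fun i => bVec h k c s (i : ℕ) with hbF
  have hbF0 : ∀ j : Fin n, ((j : ℕ) < h ∨ k + 1 < (j : ℕ)) → bF j = 0 := by
    intro j hj
    simp only [hbF]
    unfold bVec
    rw [if_neg (by omega)]
  have hab : ∀ i j : Fin n, (j : ℕ) < (i : ℕ) → R i j = aF i * (starRingEnd ℂ) (bF j) := by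
    intro i j hji
    rw [hRlow i j hji]
    rcases lt_or_ge (j : ℕ) h with hjh | hjh
    · have hz : ∀ l : Fin n, (Q * U) i l * (starRingEnd ℂ) (Q j l)
          = if l = j then (Q * U) i l else 0 := by
        intro l
        rw [hQ j l, gEnt_out h k c s _ _ (Or.inl hjh)]
        by_cases hlj : l = j
        · subst hlj; simp
        · rw [if_neg (fun hh => hlj (Fin.ext hh.symm)), if_neg hlj, map_zero, mul_zero]
      rw [Finset.sum_congr rfl fun l _ => hz l, Finset.sum_ite_eq' _ j _,
        if_pos (Finset.mem_univ j), hQU0 i j hji (Or.inr (Or.inl hjh)),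
        hbF0 j (Or.inl hjh), map_zero, mul_zero]
    · rcases le_or_gt (j : ℕ) (k + 1) with hjk | hjk
      · have hterm : ∀ l : Fin n, (Q * U) i l * (starRingEnd ℂ) (Q j l)
            = ((Q * U) i l * (starRingEnd ℂ) (vVec h k c s (l : ℕ)))
              * (starRingEnd ℂ) (bVec h k c s (j : ℕ)) := by
          intro l
          rcases le_or_gt (j : ℕ) (l : ℕ) with hjl | hjl
          · rw [hQ j l, gEnt_factor h k c s hs _ _ hjh hjk hjl, _root_.map_mul]; ring
          · rw [hQU0 i l (by omega) (by omega)]; simp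
        rw [Finset.sum_congr rfl fun l _ => hterm l, ← Finset.sum_mul]
        congr 1
        simp only [haF]
        rw [if_pos (by omega : h ≤ (i : ℕ))]
      · have hz : ∀ l : Fin n, (Q * U) i l * (starRingEnd ℂ) (Q j l)
            = if l = j then (Q * U) i l else 0 := by
          intro l
          rw [hQ j l, gEnt_out h k c s _ _ (Or.inr hjk)]
          by_cases hlj : l = j
          · subst hlj; simp
          · rw [if_neg (fun hh => hlj (Fin.ext hh.symm)), if_neg hlj, map_zero, mul_zero]
        rw [Finset.sum_congr rfl fun l _ => hz l, Finset.sum_ite_eq' _ j _,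
          if_pos (Finset.mem_univ j), hQU0 i j hji (Or.inr (Or.inr (by omega))),
          hbF0 j (Or.inr hjk), map_zero, mul_zero]
  have hRdiag0 : ∀ i : Fin n, ((i : ℕ) < h ∨ k + 1 < (i : ℕ)) → R i i = 0 := by
    intro i hi
    have hQrow : ∀ m : Fin n, Q i m = if i = m then 1 else 0 := by
      intro m
      rw [hQ i m, gEnt_out h k c s _ _ hi]
      by_cases him : i = m
      · subst him; simp
      · rw [if_neg (fun hh => him (Fin.ext hh)), if_neg him]
    rw [hRdef, Matrix.sub_apply]
    have h1 : tOp (Q * A * Qᴴ) i i = 0 := tOp_diag _ i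
    rw [h1, zero_sub, neg_eq_zero, Matrix.mul_apply]
    apply Finset.sum_eq_zero
    intro l _
    by_cases hli : l = i
    · subst hli
      have h2 : (Q * tOp A) l l = 0 := by
        rw [Matrix.mul_apply]
        apply Finset.sum_eq_zero
        intro m _
        by_cases hml : m = l
        · subst hml; rw [tOp_diag, mul_zero]
        · rw [hQrow m, if_neg (fun hh => hml hh.symm), zero_mul]
      rw [h2, zero_mul]
    · rw [Matrix.conjTranspose_apply, hQrow l, if_neg (fun hh => hli hh.symm), star_zero,
        mul_zero]
  have haF0 : ∀ i : Fin n, k + 1 < (i : ℕ) → aF i = 0 := by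
    intro i hi
    simp only [haF]
    rw [if_pos (by omega : h ≤ (i : ℕ))]
    apply Finset.sum_eq_zero
    intro l _
    rcases le_or_gt (l : ℕ) (k + 1) with hl | hl
    · rw [hQU0 i l (by omega) (by omega), zero_mul]
    · have hv : vVec h k c s (l : ℕ) = 0 := by
        unfold vVec; rw [if_neg (by omega)]
      rw [hv, map_zero, mul_zero]
  have hmain : R = Matrix.diagonal (fun i => ((R i i).re : ℂ))
      + tOp (Matrix.vecMulVec aF fun j => (starRingEnd ℂ) (bF j)) := by
    ext i j
    rcases lt_trichotomy (j : ℕ) (i : ℕ) with hij | hij | hij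
    · rw [Matrix.add_apply, Matrix.diagonal_apply_ne _ (Fin.ne_of_val_ne (by omega))]
      have h0 : tOp (Matrix.vecMulVec aF fun j => (starRingEnd ℂ) (bF j)) i j
          = aF i * (starRingEnd ℂ) (bF j) := by
        rw [tOp_apply, if_pos (Fin.lt_def.mpr hij), Matrix.vecMulVec_apply]
      rw [h0, zero_add]
      exact hab i j hij
    · have hji : j = i := Fin.ext hij
      subst hji
      rw [Matrix.add_apply, Matrix.diagonal_apply_eq]
      have h0 : tOp (Matrix.vecMulVec aF fun j => (starRingEnd ℂ) (bF j)) j j = 0 :=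
        tOp_diag _ j
      rw [h0, add_zero]
      exact (Complex.conj_eq_iff_re.mp (hRH j j).symm).symm
    · rw [Matrix.add_apply, Matrix.diagonal_apply_ne _ (Fin.ne_of_val_ne (by omega))]
      have h0 : tOp (Matrix.vecMulVec aF fun j => (starRingEnd ℂ) (bF j)) i j
          = (starRingEnd ℂ) (aF j * (starRingEnd ℂ) (bF i)) := by
        rw [tOp_apply, if_neg (show ¬ j < i from fun hh => by rw [Fin.lt_def] at hh; omega),
          if_pos (Fin.lt_def.mpr hij), Matrix.vecMulVec_apply]
      rw [h0, zero_add, hRH i j, hab j i hij]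
  refine ⟨aF, bF, fun i => (R i i).re, hmain, ?_, ?_, ?_, ?_⟩
  · intro i hi
    simp only [hbF]
    unfold bVec
    rw [hi, if_pos ⟨le_rfl, by omega⟩, if_pos rfl, one_mul]
  · intro i h1 h2
    simp only [hbF]
    unfold bVec
    rw [if_pos (by omega), if_neg (by omega)]
  · intro i hi
    refine ⟨hbF0 i hi, ?_, ?_⟩
    · rcases hi with hi | hi
      · simp only [haF]; rw [if_neg (by omega)]
      · exact haF0 i hi
    · have h0 := hRdiag0 i hi
      show (R i i).re = 0
      rw [h0]
      simp
  · intro hh p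
    rw [hmain, Matrix.add_apply]
    by_cases hp : p = (⟨0, by omega⟩ : Fin n)
    · subst hp
      rw [Matrix.diagonal_apply_eq]
      have h0 : tOp (Matrix.vecMulVec aF fun j => (starRingEnd ℂ) (bF j))
          (⟨0, by omega⟩ : Fin n) (⟨0, by omega⟩ : Fin n) = 0 :=
        tOp_diag _ _
      rw [h0, add_zero, hRdiag0 _ (Or.inl hh)]
      simp
    · rw [Matrix.diagonal_apply_ne _ hp]
      have hpz : (0 : ℕ) < (p : ℕ) := by
        rcases Nat.eq_zero_or_pos (p : ℕ) with h0 | h0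
        · exact absurd (Fin.ext h0 : p = ⟨0, by omega⟩) hp
        · exact h0
      have h0 : tOp (Matrix.vecMulVec aF fun j => (starRingEnd ℂ) (bF j)) p
          (⟨0, by omega⟩ : Fin n)
          = aF p * (starRingEnd ℂ) (bF (⟨0, by omega⟩ : Fin n)) := by
        rw [tOp_apply, if_pos (Fin.lt_def.mpr hpz), Matrix.vecMulVec_apply]
      rw [h0, hbF0 _ (Or.inl hh), map_zero, mul_zero, add_zero]
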